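/- The information content is monotone: if A ⊆ B ⊆ V, then I(X_A) ≤ I(X_B). -/
import Mathlib


open Real Finset

/-- Shannon entropy of a (probability mass) function on a finite type. -/
noncomputable def entH {α : Type*} [Fintype α] (q : α → ℝ) : ℝ :=
  ∑ x, Real.negMulLog (q x)

/-- Marginal of `p` on the coordinate set `A`. -/
noncomputable def marg {V Λ : Type*} [Fintype V] [DecidableEq V] [Fintype Λ] [DecidableEq Λ]
    (p : (V → Λ) → ℝ) (A : Finset V) : (A → Λ) → ℝ :=
  fun y => ∑ x : V → Λ, if ∀ i : A, x i.1 = y i then p x else 0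

/-- Marginal probability of the `A`-part of the full realization `x`. -/
noncomputable def margAt {V Λ : Type*} [Fintype V] [DecidableEq V] [Fintype Λ] [DecidableEq Λ]
    (p : (V → Λ) → ℝ) (A : Finset V) (x : V → Λ) : ℝ :=
  marg p A (fun i => x i.1)

/-- Information content `I(X_A) = ∑_{i∈A} H(X_i) − H(X_A)`
(this formula automatically gives `0` when `|A| < 2`). -/
noncomputable def info {V Λ : Type*} [Fintype V] [DecidableEq V] [Fintype Λ] [DecidableEq Λ]
    (p : (V → Λ) → ℝ) (A : Finset V) : ℝ :=
  (∑ i ∈ A, entH (marg p {i})) - entH (marg p A)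

/-- Kullback–Leibler divergence. -/
noncomputable def KL {α : Type*} [Fintype α] (q r : α → ℝ) : ℝ :=
  ∑ x, q x * Real.log (q x / r x)

section aux
variable {V Λ : Type*} [Fintype V] [DecidableEq V] [Fintype Λ] [DecidableEq Λ]
  (p : (V → Λ) → ℝ)

def restr (A : Finset V) (x : V → Λ) : A → Λ := fun i => x i.1

lemma marg_group (A : Finset V) (g : (A → Λ) → ℝ) :
    ∑ y : A → Λ, marg p A y * g y = ∑ x : V → Λ, p x * g (restr A x) := by
  unfold marg
  simp only [Finset.sum_mul, ite_mul, zero_mul]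
  rw [Finset.sum_comm]
  refine Finset.sum_congr rfl fun x _ => ?_
  calc ∑ y : A → Λ, (if ∀ i : A, x i.1 = y i then p x * g y else 0)
      = ∑ y : A → Λ, (if restr A x = y then p x * g y else 0) := by
        refine Finset.sum_congr rfl fun y _ => ?_
        by_cases h : restr A x = y
        · rw [if_pos h, if_pos (show ∀ i : A, x i.1 = y i from fun i => congrFun h i)]
        · rw [if_neg h, if_neg (show ¬ ∀ i : A, x i.1 = y i from fun hc => h (funext hc))]
    _ = p x * g (restr A x) := by rw [Finset.sum_ite_eq]; simp

lemma marg_nonneg (hp : ∀ x, 0 ≤ p x) (A : Finset V) (y : A → Λ) : 0 ≤ marg p A y := by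
  unfold marg
  refine Finset.sum_nonneg fun x _ => ?_
  split
  · exact hp x
  · exact le_rfl

lemma marg_sum_one (hsum : ∑ x, p x = 1) (A : Finset V) :
    ∑ y : A → Λ, marg p A y = 1 := by
  have := marg_group p A (fun _ => 1)
  simpa [hsum] using this

lemma entH_marg_eq (A : Finset V) :
    entH (marg p A) = ∑ x : V → Λ, p x * -Real.log (margAt p A x) := by
  unfold entH
  have h : ∀ y : A → Λ, Real.negMulLog (marg p A y) = marg p A y * -Real.log (marg p A y) := by
    intro y; rw [Real.negMulLog]; ring
  simp_rw [h]
  exact marg_group p A (fun y => -Real.log (marg p A y))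

lemma le_margAt (hp : ∀ x, 0 ≤ p x) (A : Finset V) (x : V → Λ) : p x ≤ margAt p A x := by
  unfold margAt marg
  have hnn : ∀ x' ∈ Finset.univ,
      0 ≤ (fun x' : V → Λ => if ∀ i : A, x' i.1 = x i.1 then p x' else 0) x' := by
    intro x' _
    dsimp only
    split
    · exact hp x'
    · exact le_rfl
  have h := Finset.single_le_sum hnn (Finset.mem_univ x)
  simpa using h

/-- equiv for insert -/
def eB {j : V} {A : Finset V} (hj : j ∉ A) :
    ({ x // x ∈ insert j A } → Λ) ≃ ((A → Λ) × Λ) where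
  toFun z := (fun i => z ⟨i.1, Finset.mem_insert_of_mem i.2⟩, z ⟨j, Finset.mem_insert_self j A⟩)
  invFun w := fun i => if h : i.1 ∈ A then w.1 ⟨i.1, h⟩ else w.2
  left_inv z := by
    funext i
    by_cases h : i.1 ∈ A
    · simp only [dif_pos h]
    · have hij : i.1 = j := by
        rcases Finset.mem_insert.mp i.2 with h' | h'
        · exact h'
        · exact absurd h' h
      dsimp only
      rw [dif_neg h]
      exact congrArg z (Subtype.ext hij.symm)
  right_inv w := by
    refine Prod.ext ?_ ?_
    · funext i
      simp only [dif_pos i.2]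
    · simp only [dif_neg hj]

def eJ (j : V) : (({j} : Finset V) → Λ) ≃ Λ where
  toFun w := w ⟨j, Finset.mem_singleton_self j⟩
  invFun a := fun _ => a
  left_inv w := by
    funext i
    exact congrArg w (Subtype.ext (Finset.mem_singleton.mp i.2).symm)
  right_inv a := rfl

lemma sum_singleton_marg (hsum : ∑ x, p x = 1) (j : V) :
    ∑ a : Λ, marg p {j} (fun _ => a) = 1 := by
  rw [← marg_sum_one p hsum ({j} : Finset V)]
  exact (Fintype.sum_equiv (eJ (Λ := Λ) j) _ _ (fun w => by
    congr 1
    funext i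
    exact congrArg w (Subtype.ext (Finset.mem_singleton.mp i.2)))).symm

end aux

section main
variable {V Λ : Type*} [Fintype V] [DecidableEq V] [Fintype Λ] [DecidableEq Λ]
  (p : (V → Λ) → ℝ)

lemma prod_marg_sum (hsum : ∑ x, p x = 1) {A : Finset V} {j : V} (hj : j ∉ A)
    (hmem : ∀ i : ({j} : Finset V), (i : V) ∈ insert j A) :
    ∑ z : { x // x ∈ insert j A } → Λ,
      marg p A (fun i => z ⟨i.1, Finset.mem_insert_of_mem i.2⟩) *
        marg p {j} (fun i => z ⟨i.1, hmem i⟩) = 1 := by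
  rw [Fintype.sum_equiv (eB (Λ := Λ) hj) _
      (fun w => marg p A w.1 * marg p {j} (fun _ => w.2)) ?_]
  · rw [Fintype.sum_prod_type]
    dsimp only
    rw [← Finset.sum_mul_sum, marg_sum_one p hsum A, sum_singleton_marg p hsum j, one_mul]
  · intro z
    exact congrArg₂ (· * ·) rfl
      (congrArg (marg p {j})
        (funext fun i => congrArg z (Subtype.ext (Finset.mem_singleton.mp i.2))))

lemma subadd (hp : ∀ x, 0 ≤ p x) (hsum : ∑ x, p x = 1) {A : Finset V} {j : V} (hj : j ∉ A) :
    entH (marg p (insert j A)) ≤ entH (marg p A) + entH (marg p {j}) := by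
  have hmem : ∀ i : ({j} : Finset V), (i : V) ∈ insert j A := by
    intro i
    have h : (i : V) = j := Finset.mem_singleton.mp i.2
    rw [h]
    exact Finset.mem_insert_self j A
  set g : ({ x // x ∈ insert j A } → Λ) → ℝ := fun z =>
    marg p A (fun i => z ⟨i.1, Finset.mem_insert_of_mem i.2⟩) *
      marg p {j} (fun i => z ⟨i.1, hmem i⟩) / marg p (insert j A) z with hg
  have hS1 : ∑ x : V → Λ, p x * (margAt p A x * margAt p {j} x / margAt p (insert j A) x)
      = ∑ z, marg p (insert j A) z * g z := by
    rw [marg_group p (insert j A) g]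
    rfl
  have hS2 : ∑ z, marg p (insert j A) z * g z ≤ 1 := by
    calc ∑ z, marg p (insert j A) z * g z
        ≤ ∑ z : { x // x ∈ insert j A } → Λ,
            marg p A (fun i => z ⟨i.1, Finset.mem_insert_of_mem i.2⟩) *
              marg p {j} (fun i => z ⟨i.1, hmem i⟩) := by
          refine Finset.sum_le_sum fun z _ => ?_
          by_cases h : marg p (insert j A) z = 0
          · rw [h, zero_mul]
            exact mul_nonneg (marg_nonneg p hp _ _) (marg_nonneg p hp _ _)
          · rw [hg]
            dsimp only
            rw [mul_comm, div_mul_cancel₀ _ h]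
      _ = 1 := prod_marg_sum p hsum hj hmem
  have hS : ∑ x : V → Λ, p x * (margAt p A x * margAt p {j} x / margAt p (insert j A) x) ≤ 1 := by
    rw [hS1]; exact hS2
  rw [entH_marg_eq, entH_marg_eq, entH_marg_eq]
  have key : ∀ x : V → Λ, p x * -Real.log (margAt p (insert j A) x)
      ≤ p x * -Real.log (margAt p A x) + p x * -Real.log (margAt p {j} x)
        + (p x * (margAt p A x * margAt p {j} x / margAt p (insert j A) x) - p x) := by
    intro x
    rcases eq_or_lt_of_le (hp x) with h0 | h0
    · simp [← h0]
    · have hA : 0 < margAt p A x := lt_of_lt_of_le h0 (le_margAt p hp A x)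
      have hJ : 0 < margAt p {j} x := lt_of_lt_of_le h0 (le_margAt p hp {j} x)
      have hB : 0 < margAt p (insert j A) x := lt_of_lt_of_le h0 (le_margAt p hp (insert j A) x)
      set t : ℝ := margAt p A x * margAt p {j} x / margAt p (insert j A) x with ht
      have htpos : 0 < t := div_pos (mul_pos hA hJ) hB
      have hlog := Real.log_le_sub_one_of_pos htpos
      have hlogt : Real.log t = Real.log (margAt p A x) + Real.log (margAt p {j} x)
          - Real.log (margAt p (insert j A) x) := by
        rw [ht, Real.log_div (by positivity) hB.ne', Real.log_mul hA.ne' hJ.ne']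
      rw [hlogt] at hlog
      have h2 := mul_le_mul_of_nonneg_left hlog (hp x)
      nlinarith [h2]
  calc ∑ x : V → Λ, p x * -Real.log (margAt p (insert j A) x)
      ≤ ∑ x : V → Λ, (p x * -Real.log (margAt p A x) + p x * -Real.log (margAt p {j} x)
          + (p x * (margAt p A x * margAt p {j} x / margAt p (insert j A) x) - p x)) :=
        Finset.sum_le_sum fun x _ => key x
    _ = (∑ x : V → Λ, p x * -Real.log (margAt p A x))
          + (∑ x : V → Λ, p x * -Real.log (margAt p {j} x))
          + ((∑ x : V → Λ, p x * (margAt p A x * margAt p {j} x / margAt p (insert j A) x))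
            - ∑ x : V → Λ, p x) := by
        rw [Finset.sum_add_distrib, Finset.sum_add_distrib, Finset.sum_sub_distrib]
    _ ≤ (∑ x : V → Λ, p x * -Real.log (margAt p A x))
          + (∑ x : V → Λ, p x * -Real.log (margAt p {j} x)) := by
        rw [hsum]
        linarith
end main

lemma info_step {V Λ : Type*} [Fintype V] [DecidableEq V] [Fintype Λ] [DecidableEq Λ]
    (p : (V → Λ) → ℝ) (hp : ∀ x, 0 ≤ p x) (hsum : ∑ x, p x = 1)
    {A : Finset V} {j : V} (hj : j ∉ A) :
    info p A ≤ info p (insert j A) := by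
  unfold info
  rw [Finset.sum_insert hj]
  have h := subadd p hp hsum hj
  linarith

/-- the information content is monotone: `A ⊆ B → I(X_A) ≤ I(X_B)`. -/
theorem info_monotone {V Λ : Type*} [Fintype V] [DecidableEq V] [Fintype Λ] [DecidableEq Λ]
    (p : (V → Λ) → ℝ) (hp : ∀ x, 0 ≤ p x) (hsum : ∑ x, p x = 1)
    (A B : Finset V) (hAB : A ⊆ B) :
    info p A ≤ info p B := by
  have key : ∀ C : Finset V, info p A ≤ info p (A ∪ C) := by
    intro C
    induction C using Finset.induction_on with
    | empty => simp
    | @insert a s ha ih =>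
      rw [Finset.union_insert]
      by_cases h : a ∈ A ∪ s
      · rwa [Finset.insert_eq_self.mpr h]
      · exact le_trans ih (info_step p hp hsum h)
  have h := key B
  rwa [Finset.union_eq_right.mpr hAB] at h
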